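/- Let G be a finite group acting by ring automorphisms on a commutative ring B, and let f ∈ B^G be an invariant element. Then the invariants of the localization agree with the localization of the invariants: (B_f)^G ≅ (B^G)_f as rings. -/

import Mathlib

/-- The invariant subring `B^G` of a finite group acting by ring
automorphisms on a commutative ring `B`. -/
def fixedSubring (G B : Type*) [Group G] [CommRing B] [MulSemiringAction G B] :
    Subring B where
  carrier := {b | ∀ g : G, g • b = b}
  one_mem' := fun g => smul_one g
  mul_mem' := fun ha hb g => by rw [smul_mul', ha g, hb g]
  add_mem' := fun ha hb g => by rw [smul_add, ha g, hb g]
  zero_mem' := fun g => smul_zero g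
  neg_mem' := fun {a} ha g => by rw [smul_neg, ha g]


/-- For an invariant element `f ∈ B^G`, the invariants of the localization
agree with the localization of the invariants: the canonical map
`(B^G)_f → (B_f)^G` is a ring isomorphism. Here `gmap g` is the action of
`g` on `B_f` (the unique ring endomorphism extending `g • ·`) and `φ` is the
canonical map `(B^G)_f → B_f`; the conclusion says `φ` is injective with
image exactly the invariants of `B_f`. -/
theorem stmt_18 {G B : Type*} [Group G] [Finite G] [CommRing B]
    [MulSemiringAction G B] (f : B) (hf : f ∈ fixedSubring G B)
    (gmap : G → (Localization.Away f →+* Localization.Away f))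
    (hgmap : ∀ g : G, (gmap g).comp (algebraMap B (Localization.Away f)) =
      (algebraMap B (Localization.Away f)).comp (MulSemiringAction.toRingHom G B g))
    (φ : Localization.Away (⟨f, hf⟩ : fixedSubring G B) →+* Localization.Away f)
    (hφ : φ.comp (algebraMap (fixedSubring G B)
        (Localization.Away (⟨f, hf⟩ : fixedSubring G B))) =
      (algebraMap B (Localization.Away f)).comp (fixedSubring G B).subtype) :
    Function.Injective φ ∧
      ∀ x : Localization.Away f, (∀ g : G, gmap g x = x) ↔ x ∈ Set.range φ := by
  have hφ' : ∀ a : fixedSubring G B,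
      φ (algebraMap (fixedSubring G B) (Localization.Away (⟨f, hf⟩ : fixedSubring G B)) a) =
        algebraMap B (Localization.Away f) (a : B) := fun a => RingHom.congr_fun hφ a
  have hgmap' : ∀ (g : G) (b : B),
      gmap g (algebraMap B (Localization.Away f) b) =
        algebraMap B (Localization.Away f) (g • b) := fun g b => RingHom.congr_fun (hgmap g) b
  constructor
  · rw [injective_iff_map_eq_zero]
    intro x hx
    obtain ⟨⟨a, s⟩, rfl⟩ := IsLocalization.mk'_surjective
      (Submonoid.powers (⟨f, hf⟩ : fixedSubring G B)) x
    have hspec := IsLocalization.mk'_spec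
      (Localization.Away (⟨f, hf⟩ : fixedSubring G B)) a s
    have h0 : algebraMap B (Localization.Away f) (a : B) = 0 := by
      rw [← hφ' a, ← hspec, map_mul, hx, zero_mul]
    obtain ⟨m, hm⟩ := (IsLocalization.map_eq_zero_iff (Submonoid.powers f)
      (Localization.Away f) (a : B)).mp h0
    obtain ⟨k, hk⟩ := m.2
    have hk' : f ^ k = (m : B) := hk
    have hAk : (⟨f, hf⟩ : fixedSubring G B) ^ k * a = 0 := by
      ext
      push_cast
      rw [hk']
      exact hm
    rw [IsLocalization.mk'_eq_zero_iff]
    exact ⟨⟨(⟨f, hf⟩ : fixedSubring G B) ^ k, ⟨k, rfl⟩⟩, hAk⟩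
  · intro x
    constructor
    · intro hx
      obtain ⟨⟨b, s⟩, rfl⟩ := IsLocalization.mk'_surjective (Submonoid.powers f) x
      obtain ⟨n, hn⟩ := s.2
      have hn' : f ^ n = (s : B) := hn
      have hspec := IsLocalization.mk'_spec (Localization.Away f) b s
      have hsfix : ∀ g : G, g • (s : B) = s := by
        intro g
        rw [← hn', smul_pow', hf g]
      have key : ∀ g : G, ∃ k : ℕ, f ^ k * (g • b) = f ^ k * b := by
        intro g
        have h1 : algebraMap B (Localization.Away f) (g • b) =
            algebraMap B (Localization.Away f) b := by
          have h2 := congrArg (gmap g) hspec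
          rw [map_mul, hx g, hgmap', hgmap', hsfix g, hspec] at h2
          exact h2.symm
        have h0 : algebraMap B (Localization.Away f) (g • b - b) = 0 := by
          rw [map_sub, h1, sub_self]
        obtain ⟨m, hm⟩ := (IsLocalization.map_eq_zero_iff (Submonoid.powers f)
          (Localization.Away f) _).mp h0
        obtain ⟨k, hk⟩ := m.2
        have hk' : f ^ k = (m : B) := hk
        refine ⟨k, ?_⟩
        have h3 : f ^ k * (g • b - b) = 0 := by rw [hk']; exact hm
        linear_combination h3
      choose k hk using key
      cases nonempty_fintype G
      have hkN : ∀ g : G, f ^ (Finset.univ.sup k) * (g • b) = f ^ (Finset.univ.sup k) * b := by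
        intro g
        have hle : k g ≤ Finset.univ.sup k := Finset.le_sup (Finset.mem_univ g)
        calc f ^ (Finset.univ.sup k) * (g • b)
            = f ^ (Finset.univ.sup k - k g) * (f ^ (k g) * (g • b)) := by
              rw [← mul_assoc, ← pow_add, Nat.sub_add_cancel hle]
          _ = f ^ (Finset.univ.sup k - k g) * (f ^ (k g) * b) := by rw [hk g]
          _ = f ^ (Finset.univ.sup k) * b := by
              rw [← mul_assoc, ← pow_add, Nat.sub_add_cancel hle]
      set N := Finset.univ.sup k with hN
      have ha : f ^ N * b ∈ fixedSubring G B := by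
        intro g
        rw [smul_mul', smul_pow', hf g]
        exact hkN g
      refine ⟨IsLocalization.mk' (Localization.Away (⟨f, hf⟩ : fixedSubring G B))
        (⟨f ^ N * b, ha⟩ : fixedSubring G B)
        (⟨(⟨f, hf⟩ : fixedSubring G B) ^ (N + n), ⟨N + n, rfl⟩⟩ :
          Submonoid.powers (⟨f, hf⟩ : fixedSubring G B)), ?_⟩
      have hu : IsUnit (algebraMap B (Localization.Away f) (f ^ (N + n))) :=
        IsLocalization.map_units (Localization.Away f)
          (⟨f ^ (N + n), ⟨N + n, rfl⟩⟩ : Submonoid.powers f)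
      apply hu.mul_left_cancel
      have hspecA := IsLocalization.mk'_spec
        (Localization.Away (⟨f, hf⟩ : fixedSubring G B)) (⟨f ^ N * b, ha⟩ : fixedSubring G B)
        (⟨(⟨f, hf⟩ : fixedSubring G B) ^ (N + n), ⟨N + n, rfl⟩⟩ :
          Submonoid.powers (⟨f, hf⟩ : fixedSubring G B))
      have lhs : φ (IsLocalization.mk' (Localization.Away (⟨f, hf⟩ : fixedSubring G B))
          (⟨f ^ N * b, ha⟩ : fixedSubring G B)
          (⟨(⟨f, hf⟩ : fixedSubring G B) ^ (N + n), ⟨N + n, rfl⟩⟩ :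
            Submonoid.powers (⟨f, hf⟩ : fixedSubring G B))) *
          algebraMap B (Localization.Away f) (f ^ (N + n)) =
          algebraMap B (Localization.Away f) (f ^ N * b) := by
        have h4 := congrArg φ hspecA
        rw [map_mul, hφ', hφ'] at h4
        have hcoe : (((⟨f, hf⟩ : fixedSubring G B) ^ (N + n) : fixedSubring G B) : B) =
            f ^ (N + n) := by push_cast; rfl
        rw [hcoe] at h4
        exact h4
      rw [mul_comm] at lhs
      rw [lhs]
      symm
      calc algebraMap B (Localization.Away f) (f ^ (N + n)) *
            IsLocalization.mk' (Localization.Away f) b s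
          = algebraMap B (Localization.Away f) (f ^ N) *
            (IsLocalization.mk' (Localization.Away f) b s *
              algebraMap B (Localization.Away f) (s : B)) := by
            rw [pow_add, map_mul, ← hn']; ring
        _ = algebraMap B (Localization.Away f) (f ^ N * b) := by rw [hspec, ← map_mul]
    · rintro ⟨y, rfl⟩ g
      have hext : (gmap g).comp φ = φ := by
        apply IsLocalization.ringHom_ext (Submonoid.powers (⟨f, hf⟩ : fixedSubring G B))
        ext a
        simp only [RingHom.comp_apply]
        rw [hφ', hgmap']
        exact congrArg _ (a.2 g)
      exact RingHom.congr_fun hext y
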